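/- Let r > 0, b ≠ 0, d ∈ ℝ, q₁ ≥ 0, q₂ ≥ 0, q₃ > 0, and set k₁ = √(q₁/r), k₂ = √(q₂/r), k₃ = √(q₃/r), k₄ = b⁻¹k₃⁻¹(k₁ + d·k₂), k₅ = b⁻¹k₃⁻¹k₂. Let f, g : ℝ → ℝ be differentiable with antiderivatives F, G (F' = f, G' = g). Define u(x) = -k₁x₁ - k₂x₂ - k₃x₃ - k₄f(x₂) - k₅g(x₃) and V(x) = rb⁻¹((k₁/√k₃)x₁ + (k₂/√k₃)x₂ + √k₃·x₃)² + 2b⁻¹r[b·k₄k₅(F(x₂)-F(0)) + k₄x₃f(x₂) + k₅(G(x₃)-G(0))], and Q(x) = 2rk₁k₂x₁x₂ + 2rk₁k₃x₁x₃ + 2rk₂k₃x₂x₃ + r(k₄² - 2dk₄k₅)f(x₂)² + rk₅²g(x₃)² - 2rb⁻¹k₄f'(x₂)x₃(df(x₂)+g(x₃)). Then for all x ∈ ℝ³: q₁x₁² + q₂x₂² + q₃x₃² + Q(x) + r·u(x)² + V_{x₁}·f(x₂) + V_{x₂}·(d·f(x₂) + g(x₃)) + V_{x₃}·b·u(x)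 = 0. -/

import Mathlib

open Real

set_option maxHeartbeats 2000000 in
/-- Theorem 6 (third-order HJB verification): for `ẋ₁ = f(x₂)`,
`ẋ₂ = df(x₂)+g(x₃)`, `ẋ₃ = bu` with the stated gains, feedback `u`, value
function `V` and cost term `Q`, the stationary HJB equation holds. -/
theorem stmt_12 (r b d q₁ q₂ q₃ k₁ k₂ k₃ k₄ k₅ : ℝ)
    (hr : 0 < r) (hb : b ≠ 0)
    (hq₁ : 0 ≤ q₁) (hq₂ : 0 ≤ q₂) (hq₃ : 0 < q₃)
    (hk₁ : k₁ = Real.sqrt (q₁ / r)) (hk₂ : k₂ = Real.sqrt (q₂ / r))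
    (hk₃ : k₃ = Real.sqrt (q₃ / r))
    (hk₄ : k₄ = b⁻¹ * k₃⁻¹ * (k₁ + d * k₂)) (hk₅ : k₅ = b⁻¹ * k₃⁻¹ * k₂)
    (f g F G : ℝ → ℝ)
    (hf : Differentiable ℝ f) (hg : Differentiable ℝ g)
    (hF : ∀ x, HasDerivAt F (f x) x) (hG : ∀ x, HasDerivAt G (g x) x)
    (u : ℝ → ℝ → ℝ → ℝ)
    (hu : ∀ x₁ x₂ x₃, u x₁ x₂ x₃ =
      -k₁ * x₁ - k₂ * x₂ - k₃ * x₃ - k₄ * f x₂ - k₅ * g x₃)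
    (V : ℝ → ℝ → ℝ → ℝ)
    (hV : ∀ x₁ x₂ x₃, V x₁ x₂ x₃ =
      r * b⁻¹ * (k₁ / Real.sqrt k₃ * x₁ + k₂ / Real.sqrt k₃ * x₂
          + Real.sqrt k₃ * x₃) ^ 2
        + 2 * b⁻¹ * r * (b * k₄ * k₅ * (F x₂ - F 0) + k₄ * x₃ * f x₂
          + k₅ * (G x₃ - G 0)))
    (Q : ℝ → ℝ → ℝ → ℝ)
    (hQ : ∀ x₁ x₂ x₃, Q x₁ x₂ x₃ =
      2 * r * k₁ * k₂ * x₁ * x₂ + 2 * r * k₁ * k₃ * x₁ * x₃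
        + 2 * r * k₂ * k₃ * x₂ * x₃
        + r * (k₄ ^ 2 - 2 * d * k₄ * k₅) * (f x₂) ^ 2
        + r * k₅ ^ 2 * (g x₃) ^ 2
        - 2 * r * b⁻¹ * k₄ * deriv f x₂ * x₃ * (d * f x₂ + g x₃)) :
    ∀ x₁ x₂ x₃ : ℝ,
      q₁ * x₁ ^ 2 + q₂ * x₂ ^ 2 + q₃ * x₃ ^ 2 + Q x₁ x₂ x₃
        + r * (u x₁ x₂ x₃) ^ 2
        + deriv (fun y => V y x₂ x₃) x₁ * f x₂
        + deriv (fun y => V x₁ y x₃) x₂ * (d * f x₂ + g x₃)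
        + deriv (fun y => V x₁ x₂ y) x₃ * (b * u x₁ x₂ x₃) = 0 := by
  intro x₁ x₂ x₃
  set c := Real.sqrt k₃ with hc
  have hk₃pos : 0 < k₃ := by
    rw [hk₃]; exact Real.sqrt_pos.mpr (div_pos hq₃ hr)
  have hcpos : 0 < c := Real.sqrt_pos.mpr hk₃pos
  have hc2 : c ^ 2 = k₃ := Real.sq_sqrt hk₃pos.le
  have hq1 : q₁ = r * k₁ ^ 2 := by
    rw [hk₁, Real.sq_sqrt (div_nonneg hq₁ hr.le)]; field_simp
  have hq2 : q₂ = r * k₂ ^ 2 := by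
    rw [hk₂, Real.sq_sqrt (div_nonneg hq₂ hr.le)]; field_simp
  have hq3 : q₃ = r * k₃ ^ 2 := by
    rw [hk₃, Real.sq_sqrt (div_nonneg hq₃.le hr.le)]; field_simp
  have hlin1 : ∀ y : ℝ, HasDerivAt (fun y : ℝ => k₁ / c * y + k₂ / c * x₂ + c * x₃)
      (k₁ / c * 1) y := fun y =>
    (((hasDerivAt_id y).const_mul (k₁ / c)).add_const (k₂ / c * x₂)).add_const (c * x₃)
  have hlin2 : ∀ y : ℝ, HasDerivAt (fun y : ℝ => k₁ / c * x₁ + k₂ / c * y + c * x₃)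
      (k₂ / c * 1 + 0) y := fun y =>
    ((((hasDerivAt_id y).const_mul (k₂ / c)).const_add (k₁ / c * x₁)).add
      (hasDerivAt_const y (c * x₃)))
  have hlin3 : ∀ y : ℝ, HasDerivAt (fun y : ℝ => k₁ / c * x₁ + k₂ / c * x₂ + c * y)
      (c * 1) y := fun y =>
    ((hasDerivAt_id y).const_mul c).const_add (k₁ / c * x₁ + k₂ / c * x₂)
  -- derivative in x₁
  have h1 : deriv (fun y => V y x₂ x₃) x₁
      = r * b⁻¹ * (2 * (k₁ / c * x₁ + k₂ / c * x₂ + c * x₃) * (k₁ / c)) := by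
    have e : (fun y => V y x₂ x₃) = fun y : ℝ =>
        r * b⁻¹ * (k₁ / c * y + k₂ / c * x₂ + c * x₃) ^ 2
          + 2 * b⁻¹ * r * (b * k₄ * k₅ * (F x₂ - F 0) + k₄ * x₃ * f x₂
            + k₅ * (G x₃ - G 0)) := funext fun y => hV y x₂ x₃
    rw [e]
    have h := ((((hlin1 x₁).pow 2).const_mul (r * b⁻¹)).add_const
      (2 * b⁻¹ * r * (b * k₄ * k₅ * (F x₂ - F 0) + k₄ * x₃ * f x₂
        + k₅ * (G x₃ - G 0))))
    refine h.deriv.trans ?_; push_cast; ring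
  -- derivative in x₂
  have h2 : deriv (fun y => V x₁ y x₃) x₂
      = r * b⁻¹ * (2 * (k₁ / c * x₁ + k₂ / c * x₂ + c * x₃) * (k₂ / c))
        + 2 * b⁻¹ * r * (b * k₄ * k₅ * f x₂ + k₄ * x₃ * deriv f x₂) := by
    have e : (fun y => V x₁ y x₃) = fun y : ℝ =>
        r * b⁻¹ * (k₁ / c * x₁ + k₂ / c * y + c * x₃) ^ 2
          + 2 * b⁻¹ * r * (b * k₄ * k₅ * (F y - F 0) + k₄ * x₃ * f y
            + k₅ * (G x₃ - G 0)) := funext fun y => hV x₁ y x₃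
    rw [e]
    have hinner : HasDerivAt (fun y : ℝ =>
        b * k₄ * k₅ * (F y - F 0) + k₄ * x₃ * f y + k₅ * (G x₃ - G 0))
        (b * k₄ * k₅ * f x₂ + (k₄ * x₃) * deriv f x₂) x₂ :=
      ((((hF x₂).sub_const (F 0)).const_mul (b * k₄ * k₅)).add
        (((hf x₂).hasDerivAt).const_mul (k₄ * x₃))).add_const (k₅ * (G x₃ - G 0))
    have h := (((hlin2 x₂).pow 2).const_mul (r * b⁻¹)).add
      (hinner.const_mul (2 * b⁻¹ * r))
    refine h.deriv.trans ?_; push_cast; ring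
  -- derivative in x₃
  have h3 : deriv (fun y => V x₁ x₂ y) x₃
      = r * b⁻¹ * (2 * (k₁ / c * x₁ + k₂ / c * x₂ + c * x₃) * c)
        + 2 * b⁻¹ * r * (k₄ * f x₂ + k₅ * g x₃) := by
    have e : (fun y => V x₁ x₂ y) = fun y : ℝ =>
        r * b⁻¹ * (k₁ / c * x₁ + k₂ / c * x₂ + c * y) ^ 2
          + 2 * b⁻¹ * r * (b * k₄ * k₅ * (F x₂ - F 0) + k₄ * y * f x₂
            + k₅ * (G y - G 0)) := funext fun y => hV x₁ x₂ y
    rw [e]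
    have hinner : HasDerivAt (fun y : ℝ =>
        b * k₄ * k₅ * (F x₂ - F 0) + k₄ * y * f x₂ + k₅ * (G y - G 0))
        (0 + k₄ * 1 * f x₂ + k₅ * g x₃) x₃ :=
      ((hasDerivAt_const x₃ (b * k₄ * k₅ * (F x₂ - F 0))).add
        (((hasDerivAt_id x₃).const_mul k₄).mul_const (f x₂))).add
        (((hG x₃).sub_const (G 0)).const_mul k₅)
    have h := (((hlin3 x₃).pow 2).const_mul (r * b⁻¹)).add
      (hinner.const_mul (2 * b⁻¹ * r))
    refine h.deriv.trans ?_; push_cast; ring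
  rw [h1, h2, h3, hu, hQ, hq1, hq2, hq3, hk₄, hk₅, ← hc2]
  have hcne : c ≠ 0 := hcpos.ne'
  field_simp
  ring
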